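/- Let A be a real n×d matrix, S a real s×n matrix, ε ≥ 0, c ≥ 0, and k an integer with 0 ≤ k ≤ d. Suppose that for every d×d orthogonal projection matrix P with rank(P) ≤ k it holds that ‖A(I−P)‖_F² ≤ ‖SA(I−P)‖_F² + c ≤ (1+ε)‖A(I−P)‖_F². Then res_k(A)² ≤ res_k(SA)² + c ≤ (1+ε)·res_k(A)². (This is Lemma 3.5 of the paper: a projection-cost preserving sketch preserves the rank-k residual error.) -/

import Mathlib

/-- Squared Frobenius norm of a real matrix. -/
noncomputable def frobSq {n d : ℕ} (M : Matrix (Fin n) (Fin d) ℝ) : ℝ :=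
  ∑ i, ∑ j, (M i j) ^ 2

/-- An orthogonal projection matrix: symmetric and idempotent. -/
def IsOrthProj {d : ℕ} (P : Matrix (Fin d) (Fin d) ℝ) : Prop :=
  P.transpose = P ∧ P * P = P

/-- Squared rank-`k` residual error: infimum of `‖M - B‖_F²` over matrices `B` of rank `≤ k`. -/
noncomputable def resSq {n d : ℕ} (k : ℕ) (M : Matrix (Fin n) (Fin d) ℝ) : ℝ :=
  sInf {x : ℝ | ∃ B : Matrix (Fin n) (Fin d) ℝ, B.rank ≤ k ∧ x = frobSq (M - B)}

open Matrix in
private lemma frobSq_nonneg {n d : ℕ} (M : Matrix (Fin n) (Fin d) ℝ) : 0 ≤ frobSq M := by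
  unfold frobSq; positivity

open Matrix

lemma exists_proj {m d : ℕ} (k : ℕ) (B : Matrix (Fin m) (Fin d) ℝ) (hB : B.rank ≤ k) :
    ∃ P : Matrix (Fin d) (Fin d) ℝ, IsOrthProj P ∧ P.rank ≤ k ∧ B * P = B := by
  set W : Submodule ℝ (EuclideanSpace ℝ (Fin d)) :=
    LinearMap.range (Matrix.toEuclideanLin Bᵀ) with hW
  set f : EuclideanSpace ℝ (Fin d) →ₗ[ℝ] EuclideanSpace ℝ (Fin d) :=
    (W.subtypeL ∘L W.orthogonalProjectionOnto).toLinearMap with hf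
  set P : Matrix (Fin d) (Fin d) ℝ := Matrix.toEuclideanLin.symm f with hP
  have hPf : Matrix.toEuclideanLin P = f := LinearEquiv.apply_symm_apply _ _
  have hfix : ∀ x ∈ W, f x = x := by
    intro x hx
    exact W.starProjection_eq_self_iff.2 hx
  -- herm
  have hherm : P.IsHermitian := by
    rw [Matrix.isHermitian_iff_isSymmetric, hPf]
    exact W.starProjection_isSymmetric
  have hsym : Pᵀ = P := by
    have := hherm
    unfold Matrix.IsHermitian at this
    simpa using this
  have hidem : P * P = P := by
    apply Matrix.toEuclideanLin.injective
    rw [Matrix.toEuclideanLin_eq_toLin, Matrix.toLin_mul _ (PiLp.basisFun 2 ℝ (Fin d)) _,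
      ← Matrix.toEuclideanLin_eq_toLin, hPf]
    exact LinearMap.ext fun x => hfix (f x) (by simp [hf])
  have hrank : P.rank ≤ k := by
    have h1 : P.rank = Module.finrank ℝ (LinearMap.range f) := by
      rw [Matrix.rank_eq_finrank_range_toLin P (PiLp.basisFun 2 ℝ (Fin d))
        (PiLp.basisFun 2 ℝ (Fin d)), ← Matrix.toEuclideanLin_eq_toLin, hPf]
    have h2 : LinearMap.range f ≤ W := by
      rintro x ⟨y, rfl⟩
      simp [hf]
    have h3 : B.rank = Module.finrank ℝ W := by
      rw [hW, ← Matrix.rank_transpose B,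
        Matrix.rank_eq_finrank_range_toLin Bᵀ (PiLp.basisFun 2 ℝ (Fin d))
        (PiLp.basisFun 2 ℝ (Fin m)), ← Matrix.toEuclideanLin_eq_toLin]
    calc P.rank = Module.finrank ℝ (LinearMap.range f) := h1
      _ ≤ Module.finrank ℝ W := Submodule.finrank_mono h2
      _ = B.rank := h3.symm
      _ ≤ k := hB
  have hBP : B * P = B := by
    have hPB : P * Bᵀ = Bᵀ := by
      apply Matrix.toEuclideanLin.injective
      rw [Matrix.toEuclideanLin_eq_toLin, Matrix.toLin_mul _ (PiLp.basisFun 2 ℝ (Fin d)) _,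
        ← Matrix.toEuclideanLin_eq_toLin, ← Matrix.toEuclideanLin_eq_toLin, hPf]
      exact LinearMap.ext fun x => hfix _ ⟨x, rfl⟩
    have := congrArg Matrix.transpose hPB
    rwa [Matrix.transpose_mul, Matrix.transpose_transpose, hsym] at this
  exact ⟨P, ⟨hsym, hidem⟩, hrank, hBP⟩


lemma key1 {m d : ℕ} (M B : Matrix (Fin m) (Fin d) ℝ) (P : Matrix (Fin d) (Fin d) ℝ)
    (hP : IsOrthProj P) (hBP : B * P = B) :
    frobSq (M * (1 - P)) ≤ frobSq (M - B) := by
  obtain ⟨hsym, hidem⟩ := hP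
  set X := M * (1 - P) with hX
  set Y := M * P - B with hY
  have hdecomp : M - B = X + Y := by
    rw [hX, hY, Matrix.mul_sub, Matrix.mul_one]; abel
  have hzero : X * Yᵀ = 0 := by
    have h1 : (1 - P) * Yᵀ = 0 := by
      have hPB : P * Bᵀ = Bᵀ := by
        have := congrArg Matrix.transpose hBP
        rwa [Matrix.transpose_mul, hsym] at this
      rw [hY, Matrix.transpose_sub, Matrix.transpose_mul, hsym,
        Matrix.mul_sub, Matrix.sub_mul, Matrix.sub_mul, Matrix.one_mul, Matrix.one_mul,
        ← Matrix.mul_assoc, hidem, hPB]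
      abel
    rw [hX, Matrix.mul_assoc, h1, Matrix.mul_zero]
  have hcross : ∑ i, ∑ j, X i j * Y i j = 0 := by
    have : ∀ i, (X * Yᵀ) i i = ∑ j, X i j * Y i j := by
      intro i; simp [Matrix.mul_apply, Matrix.transpose_apply]
    calc ∑ i, ∑ j, X i j * Y i j = ∑ i, (X * Yᵀ) i i := by
          exact (Finset.sum_congr rfl fun i _ => (this i).symm)
      _ = 0 := by rw [hzero]; simp
  have hY0 : 0 ≤ frobSq Y := frobSq_nonneg Y
  have hexp : frobSq (M - B) = frobSq X + frobSq Y + 2 * ∑ i, ∑ j, X i j * Y i j := by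
    rw [hdecomp]
    unfold frobSq
    rw [Finset.mul_sum, ← Finset.sum_add_distrib, ← Finset.sum_add_distrib]
    refine Finset.sum_congr rfl fun i _ => ?_
    rw [Finset.mul_sum, ← Finset.sum_add_distrib, ← Finset.sum_add_distrib]
    refine Finset.sum_congr rfl fun j _ => ?_
    simp [Matrix.add_apply]; ring
  rw [hexp, hcross]; linarith

theorem pcp_preserves_residual {n d s : ℕ} (A : Matrix (Fin n) (Fin d) ℝ)
    (S : Matrix (Fin s) (Fin n) ℝ) (ε c : ℝ) (hε : 0 ≤ ε) (hc : 0 ≤ c)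
    (k : ℕ) (hk : k ≤ d)
    (h : ∀ P : Matrix (Fin d) (Fin d) ℝ, IsOrthProj P → P.rank ≤ k →
      frobSq (A * (1 - P)) ≤ frobSq (S * A * (1 - P)) + c ∧
      frobSq (S * A * (1 - P)) + c ≤ (1 + ε) * frobSq (A * (1 - P))) :
    resSq k A ≤ resSq k (S * A) + c ∧
    resSq k (S * A) + c ≤ (1 + ε) * resSq k A := by
  have hSetA : (Set.Nonempty {x : ℝ | ∃ B : Matrix (Fin n) (Fin d) ℝ, B.rank ≤ k ∧ x = frobSq (A - B)}) :=
    ⟨frobSq A, 0, by simp, by simp⟩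
  have hSetSA : (Set.Nonempty {x : ℝ | ∃ B : Matrix (Fin s) (Fin d) ℝ, B.rank ≤ k ∧ x = frobSq (S * A - B)}) :=
    ⟨frobSq (S * A), 0, by simp, by simp⟩
  have hbddA : BddBelow {x : ℝ | ∃ B : Matrix (Fin n) (Fin d) ℝ, B.rank ≤ k ∧ x = frobSq (A - B)} :=
    ⟨0, fun x ⟨B, _, hx⟩ => hx ▸ frobSq_nonneg _⟩
  have hbddSA : BddBelow {x : ℝ | ∃ B : Matrix (Fin s) (Fin d) ℝ, B.rank ≤ k ∧ x = frobSq (S * A - B)} :=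
    ⟨0, fun x ⟨B, _, hx⟩ => hx ▸ frobSq_nonneg _⟩
  -- generic: membership of M*(1-P)-based element
  have memA : ∀ P : Matrix (Fin d) (Fin d) ℝ, P.rank ≤ k →
      frobSq (A * (1 - P)) ∈ {x : ℝ | ∃ B : Matrix (Fin n) (Fin d) ℝ, B.rank ≤ k ∧ x = frobSq (A - B)} := by
    intro P hPk
    exact ⟨A * P, le_trans (Matrix.rank_mul_le_right A P) hPk, by
      rw [Matrix.mul_sub, Matrix.mul_one]⟩
  have memSA : ∀ P : Matrix (Fin d) (Fin d) ℝ, P.rank ≤ k →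
      frobSq (S * A * (1 - P)) ∈ {x : ℝ | ∃ B : Matrix (Fin s) (Fin d) ℝ, B.rank ≤ k ∧ x = frobSq (S * A - B)} := by
    intro P hPk
    exact ⟨S * A * P, le_trans (Matrix.rank_mul_le_right (S * A) P) hPk, by
      rw [Matrix.mul_sub, Matrix.mul_one]⟩
  constructor
  · -- resSq k A ≤ resSq k (S*A) + c
    have key : ∀ x ∈ {x : ℝ | ∃ B : Matrix (Fin s) (Fin d) ℝ, B.rank ≤ k ∧ x = frobSq (S * A - B)},
        resSq k A - c ≤ x := by
      rintro x ⟨B, hBk, rfl⟩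
      obtain ⟨P, hPo, hPk, hBP⟩ := exists_proj k B hBk
      have h1 : resSq k A ≤ frobSq (A * (1 - P)) := csInf_le hbddA (memA P hPk)
      have h2 := (h P hPo hPk).1
      have h3 : frobSq (S * A * (1 - P)) ≤ frobSq (S * A - B) := key1 (S * A) B P hPo hBP
      linarith
    have := le_csInf hSetSA key
    unfold resSq at this ⊢
    linarith
  · -- resSq k (S*A) + c ≤ (1+ε) * resSq k A
    have key : ∀ x ∈ {x : ℝ | ∃ B : Matrix (Fin n) (Fin d) ℝ, B.rank ≤ k ∧ x = frobSq (A - B)},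
        (resSq k (S * A) + c) / (1 + ε) ≤ x := by
      rintro x ⟨B, hBk, rfl⟩
      obtain ⟨P, hPo, hPk, hBP⟩ := exists_proj k B hBk
      have h1 : resSq k (S * A) ≤ frobSq (S * A * (1 - P)) := csInf_le hbddSA (memSA P hPk)
      have h2 := (h P hPo hPk).2
      have h3 : frobSq (A * (1 - P)) ≤ frobSq (A - B) := key1 A B P hPo hBP
      rw [div_le_iff₀ (by linarith : (0:ℝ) < 1 + ε)]
      nlinarith
    have := le_csInf hSetA key
    have hpos : (0:ℝ) < 1 + ε := by linarith
    unfold resSq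
    rw [div_le_iff₀ hpos] at this
    unfold resSq at this
    linarith
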